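/- arXiv:2109.09651 — 2 statements merged into one kernel-verified Lean document; each statement's English description precedes it below -/
import Mathlib

section
/- (Global solvability of the eikonal equation.) Let ν_n : 𝕋 × ℝ → ℝ (n ∈ ℕ) be C¹ functions such that for fixed (ξ,k), n ↦ ν_n(ξ,k) is strictly increasing, ν_n(ξ,k) ≥ m(n+1/2), ν_n(ξ,k) → b₋(n+1/2) as k → -∞ and → b₊(n+1/2) as k → +∞, uniformly in ξ. Let λ ∉ Σ, where Σ = σ_bulk ∪ σ_sing, σ_bulk = {b₋(n+1/2)} ∪ {b₊(n+1/2)} and σ_sing = {λ : ∃ n, (ξ,k) with ν_n(ξ,k) = λ and ∂_k ν_n(ξ,k) = 0}. Then there exist N ∈ ℕ and C¹ functions k₁, …, k_N : 𝕋 → ℝ such that for each j there exists n_j ∈ ℕ with ν_{n_j}(ξ, k_j(ξ)) = λ for all ξ ∈ 𝕋, and these exhaust all solutions: for each ξ the set {k : ∃ n, ν_n(ξ,k) = λ} equals {k₁(ξ), …, k_N(ξ)}. -/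
open Filter

/-- Build the linear equivalence `(u,v) ↦ (u, L(u,v))` when `L (0,1) ≠ 0`. -/
noncomputable def sliceEquiv (L : ℝ × ℝ →L[ℝ] ℝ) (hb : L (0,1) ≠ 0) : (ℝ × ℝ) ≃L[ℝ] (ℝ × ℝ) :=
  ContinuousLinearEquiv.equivOfInverse
    ((ContinuousLinearMap.fst ℝ ℝ ℝ).prod L)
    ((ContinuousLinearMap.fst ℝ ℝ ℝ).prod
      ((L (0,1))⁻¹ • ((ContinuousLinearMap.snd ℝ ℝ ℝ) -
        L.comp ((ContinuousLinearMap.fst ℝ ℝ ℝ).prod 0))))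
    (by
      intro p
      obtain ⟨u, v⟩ := p
      have h1 : (u, v) = (u, 0) + (0, v) := by simp
      have h2 : L (u, v) = L (u, 0) + v * L (0,1) := by
        rw [h1, map_add]
        congr 1
        have : ((0:ℝ), v) = v • ((0:ℝ),(1:ℝ)) := by simp
        rw [this, map_smul, smul_eq_mul]
      simp only [ContinuousLinearMap.prod_apply, ContinuousLinearMap.coe_fst',
        ContinuousLinearMap.smul_apply, ContinuousLinearMap.sub_apply,
        ContinuousLinearMap.coe_snd', ContinuousLinearMap.coe_comp', Function.comp_apply,
        ContinuousLinearMap.zero_apply, Prod.mk.injEq, true_and]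
      rw [h2]
      field_simp
      rw [smul_eq_mul, add_sub_cancel_left, one_div, inv_mul_cancel_left₀ hb]
    )
    (by
      intro p
      obtain ⟨u, w⟩ := p
      simp only [ContinuousLinearMap.prod_apply, ContinuousLinearMap.coe_fst',
        ContinuousLinearMap.smul_apply, ContinuousLinearMap.sub_apply,
        ContinuousLinearMap.coe_snd', ContinuousLinearMap.coe_comp', Function.comp_apply,
        ContinuousLinearMap.zero_apply, Prod.mk.injEq, true_and]
      rw [smul_eq_mul]
      set c := (L (0,1))⁻¹ * (w - L (u, 0)) with hc
      have h2 : L (u, c) = L (u, 0) + c * L (0,1) := by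
        have h1 : (u, c) = (u, 0) + (0, c) := by simp
        rw [h1, map_add]
        congr 1
        have : ((0:ℝ), c) = c • ((0:ℝ),(1:ℝ)) := by simp
        rw [this, map_smul, smul_eq_mul]
      rw [h2, hc]
      field_simp
      ring
    )

@[simp] lemma sliceEquiv_coe (L : ℝ × ℝ →L[ℝ] ℝ) (hb : L (0,1) ≠ 0) :
    (sliceEquiv L hb : (ℝ × ℝ) →L[ℝ] (ℝ × ℝ)) = (ContinuousLinearMap.fst ℝ ℝ ℝ).prod L := rfl

/-- Local implicit function: at a solution point with nonzero `k`-derivative there is a local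
C¹ solution curve, unique in a rectangle. -/
lemma local_implicit (f : ℝ → ℝ → ℝ) (lam : ℝ)
    (hC1 : ContDiff ℝ 1 fun p : ℝ × ℝ => f p.1 p.2)
    (ξ₀ k₀ : ℝ) (hsol : f ξ₀ k₀ = lam)
    (hd : deriv (f ξ₀) k₀ ≠ 0) :
    ∃ g : ℝ → ℝ, ContDiffAt ℝ 1 g ξ₀ ∧ g ξ₀ = k₀ ∧
      ∃ δ > (0:ℝ), ∃ ρ > (0:ℝ),
        (∀ ξ, |ξ - ξ₀| < δ → |g ξ - k₀| < ρ ∧ f ξ (g ξ) = lam) ∧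
        (∀ ξ k, |ξ - ξ₀| < δ → |k - k₀| < ρ → f ξ k = lam → k = g ξ) := by
  set F : ℝ × ℝ → ℝ := fun p => f p.1 p.2 with hF
  set x : ℝ × ℝ := (ξ₀, k₀) with hx
  have hdiff : DifferentiableAt ℝ F x := (hC1.contDiffAt).differentiableAt one_ne_zero
  set L : ℝ × ℝ →L[ℝ] ℝ := fderiv ℝ F x with hL
  have hFd : HasFDerivAt F L x := hdiff.hasFDerivAt
  -- partial derivative is L (0,1)
  have hcurve : HasDerivAt (fun k => F (ξ₀, k)) (L (0,1)) k₀ := by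
    have hg : HasDerivAt (fun k : ℝ => ((ξ₀, k) : ℝ × ℝ)) ((0:ℝ),(1:ℝ)) k₀ :=
      (hasDerivAt_const k₀ ξ₀).prodMk (hasDerivAt_id k₀)
    exact hFd.comp_hasDerivAt k₀ hg
  have hb : L (0,1) ≠ 0 := by
    have : deriv (f ξ₀) k₀ = L (0,1) := hcurve.deriv
    rwa [this] at hd
  -- the map Φ
  set Φ : ℝ × ℝ → ℝ × ℝ := fun p => (p.1, F p) with hΦ
  set e := sliceEquiv L hb with he
  have hΦd : HasFDerivAt Φ (e : (ℝ × ℝ) →L[ℝ] (ℝ × ℝ)) x := by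
    rw [sliceEquiv_coe]
    exact ((ContinuousLinearMap.fst ℝ ℝ ℝ).hasFDerivAt).prodMk hFd
  have hΦC1 : ContDiffAt ℝ 1 Φ x := (contDiffAt_fst).prodMk hC1.contDiffAt
  set Ψ := hΦC1.localInverse hΦd one_ne_zero with hΨ
  have hΨC1 : ContDiffAt ℝ 1 Ψ (Φ x) := hΦC1.to_localInverse hΦd one_ne_zero
  have hstrict : HasStrictFDerivAt Φ (e : (ℝ × ℝ) →L[ℝ] (ℝ × ℝ)) x :=
    hΦC1.hasStrictFDerivAt' hΦd one_ne_zero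
  have hΨdef : Ψ = hstrict.localInverse Φ e x := rfl
  have hleft : ∀ᶠ p in nhds x, Ψ (Φ p) = p := hstrict.eventually_left_inverse
  have hright : ∀ᶠ q in nhds (Φ x), Φ (Ψ q) = q := hstrict.eventually_right_inverse
  -- define g
  set g : ℝ → ℝ := fun ξ => (Ψ (ξ, lam)).2 with hg
  have hΦx : Φ x = (ξ₀, lam) := by simp [hΦ, hF, hx, hsol]
  have hgC1 : ContDiffAt ℝ 1 g ξ₀ := by
    have h1 : ContDiffAt ℝ 1 (fun ξ : ℝ => ((ξ, lam) : ℝ × ℝ)) ξ₀ :=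
      (contDiffAt_id).prodMk contDiffAt_const
    have h2 : ContDiffAt ℝ 1 Ψ (ξ₀, lam) := by rwa [hΦx] at hΨC1
    exact (contDiffAt_snd.comp _ (h2.comp ξ₀ h1))
  have hgx : g ξ₀ = k₀ := by
    have : Ψ (Φ x) = x := hleft.self_of_nhds
    rw [hΦx] at this
    simp [hg, this, hx]
  obtain ⟨ε₁, hε₁, hleft'⟩ := Metric.eventually_nhds_iff.mp hleft
  rw [hΦx] at hright
  obtain ⟨ε₂, hε₂, hright'⟩ := Metric.eventually_nhds_iff.mp hright
  have hgc : ContinuousAt g ξ₀ := hgC1.continuousAt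
  have hev : ∀ᶠ ξ in nhds ξ₀, |g ξ - k₀| < ε₁ := by
    have : Set.Iio ε₁ ∈ nhds (|g ξ₀ - k₀|) := by
      rw [hgx]
      simpa using Iio_mem_nhds hε₁
    exact ((continuous_abs.continuousAt).comp ((hgc.sub continuousAt_const))).preimage_mem_nhds this
  obtain ⟨δ₃, hδ₃, hδ₃'⟩ := Metric.eventually_nhds_iff.mp hev
  refine ⟨g, hgC1, hgx, min ε₁ (min ε₂ δ₃), by positivity, ε₁, hε₁, ?_, ?_⟩
  · intro ξ hξ
    have hξ2 : |ξ - ξ₀| < ε₂ := lt_of_lt_of_le hξ ((min_le_right _ _).trans (min_le_left _ _))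
    have hξ3 : |ξ - ξ₀| < δ₃ := lt_of_lt_of_le hξ ((min_le_right _ _).trans (min_le_right _ _))
    have hnear : dist ((ξ, lam) : ℝ × ℝ) (ξ₀, lam) < ε₂ := by
      rw [Prod.dist_eq]
      simp [Real.dist_eq, hξ2, hε₂]
    have hRq := hright' hnear
    have h1 : (Ψ (ξ, lam)).1 = ξ := congrArg Prod.fst hRq
    have h2 : F (Ψ (ξ, lam)) = lam := congrArg Prod.snd hRq
    refine ⟨hδ₃' (by simpa [Real.dist_eq] using hξ3), ?_⟩
    have : F (Ψ (ξ, lam)) = f ξ (g ξ) := by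
      rw [hF]
      simp only []
      rw [h1]
    rw [← this, h2]
  · intro ξ k hξ hk hfk
    have hξ1 : |ξ - ξ₀| < ε₁ := lt_of_lt_of_le hξ (min_le_left _ _)
    have hnear : dist ((ξ, k) : ℝ × ℝ) x < ε₁ := by
      rw [hx, Prod.dist_eq]
      simp [Real.dist_eq, hξ1, hk]
    have hLp := hleft' hnear
    have hΦp : Φ (ξ, k) = (ξ, lam) := by simp [hΦ, hF, hfk]
    rw [hΦp] at hLp
    have := congrArg Prod.snd hLp
    simp only [hg] at this ⊢
    rw [this]

/-- A positive lower bound for finitely many positive reals. -/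
lemma fin_pos_min (r : ℕ) (δ : Fin r → ℝ) (h : ∀ j, 0 < δ j) :
    ∃ ε > (0:ℝ), ∀ j, ε ≤ δ j := by
  classical
  have hne : (insert (1:ℝ) (Finset.univ.image δ)).Nonempty := ⟨1, Finset.mem_insert_self _ _⟩
  refine ⟨(insert (1:ℝ) (Finset.univ.image δ)).min' hne, ?_, ?_⟩
  · rcases Finset.mem_insert.mp ((insert (1:ℝ) (Finset.univ.image δ)).min'_mem hne) with h1 | h2
    · rw [h1]; norm_num
    · obtain ⟨j, _, hj⟩ := Finset.mem_image.mp h2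
      rw [← hj]; exact h j
  · intro j
    exact Finset.min'_le _ _ (Finset.mem_insert_of_mem (Finset.mem_image_of_mem δ (Finset.mem_univ j)))

/-- A uniform gap for a strictly monotone finite family. -/
lemma fin_gap (r : ℕ) (k : Fin r → ℝ) (hk : StrictMono k) :
    ∃ ρ > (0:ℝ), ∀ i j : Fin r, i < j → k i + ρ + ρ ≤ k j := by
  classical
  rcases (Finset.univ.filter (fun p : Fin r × Fin r => p.1 < p.2)).eq_empty_or_nonempty
    with hE | hNE
  · refine ⟨1, one_pos, fun i j hij => ?_⟩
    have hmem : (i,j) ∈ Finset.univ.filter (fun p : Fin r × Fin r => p.1 < p.2) :=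
      Finset.mem_filter.mpr ⟨Finset.mem_univ _, hij⟩
    rw [hE] at hmem
    exact absurd hmem (Finset.notMem_empty _)
  · set μ := (Finset.univ.filter (fun p : Fin r × Fin r => p.1 < p.2)).inf' hNE
      (fun p => k p.2 - k p.1) with hμ
    have hμpos : 0 < μ := by
      rw [hμ, Finset.lt_inf'_iff]
      intro p hp
      have := (Finset.mem_filter.mp hp).2
      simpa using hk this
    refine ⟨μ/4, by linarith, fun i j hij => ?_⟩
    have hmem : (i,j) ∈ Finset.univ.filter (fun p : Fin r × Fin r => p.1 < p.2) :=
      Finset.mem_filter.mpr ⟨Finset.mem_univ _, hij⟩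
    have h2 : μ ≤ k (i,j).2 - k (i,j).1 :=
      Finset.inf'_le (fun p : Fin r × Fin r => k p.2 - k p.1) hmem
    simp only at h2
    linarith

/-- Each fiber is finite. -/
lemma fiber_finite (f : ℝ → ℝ → ℝ) (lam K : ℝ)
    (hC1 : ContDiff ℝ 1 fun p : ℝ × ℝ => f p.1 p.2)
    (hK : ∀ ξ k, f ξ k = lam → |k| < K)
    (hsing : ∀ ξ k, f ξ k = lam → deriv (f ξ) k ≠ 0)
    (ξ : ℝ) : {k : ℝ | f ξ k = lam}.Finite := by
  set S : Set ℝ := {k : ℝ | f ξ k = lam} with hS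
  have hcont : Continuous (f ξ) := by
    have : Continuous fun k : ℝ => (fun p : ℝ × ℝ => f p.1 p.2) (ξ, k) :=
      hC1.continuous.comp (continuous_const.prodMk continuous_id)
    simpa using this
  have hclosed : IsClosed S := isClosed_eq hcont continuous_const
  have hsub : S ⊆ Set.Icc (-K) K := fun k hk => by
    have := hK ξ k hk
    rw [abs_lt] at this
    exact ⟨le_of_lt this.1, le_of_lt this.2⟩
  have hcomp : IsCompact S := isCompact_Icc.of_isClosed_subset hclosed hsub
  have hdisc : DiscreteTopology S := by
    rw [discreteTopology_subtype_iff]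
    intro k₀ hk₀
    rw [Filter.inf_principal_eq_bot]
    obtain ⟨g, _, hgx, δ, hδ, ρ, hρ, _, huniq⟩ :=
      local_implicit f lam hC1 ξ k₀ hk₀ (hsing ξ k₀ hk₀)
    have hmem : Metric.ball k₀ ρ \ {k₀} ∈ nhdsWithin k₀ {k₀}ᶜ := by
      refine mem_nhdsWithin.mpr ⟨Metric.ball k₀ ρ, Metric.isOpen_ball,
        Metric.mem_ball_self hρ, ?_⟩
      intro y hy
      exact ⟨hy.1, hy.2⟩
    refine Filter.mem_of_superset hmem ?_
    intro y hy
    intro hyS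
    have : y = g ξ := huniq ξ y (by simpa using hδ) (by
      have := hy.1
      rwa [Metric.mem_ball, Real.dist_eq] at this) hyS
    rw [hgx] at this
    exact hy.2 (by simp [this])
  haveI := isCompact_iff_compactSpace.mp hcomp
  have : Finite S := Finite.of_finite_univ isCompact_univ.finite_of_discrete
  exact Set.finite_coe_iff.mp this

/-- Local structure of the solution set: near any `ξ₀` the solution set is the union of
finitely many ordered C¹ graphs. -/
lemma local_structure (f : ℝ → ℝ → ℝ) (lam K : ℝ)
    (hC1 : ContDiff ℝ 1 fun p : ℝ × ℝ => f p.1 p.2)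
    (hK : ∀ ξ k, f ξ k = lam → |k| < K)
    (hsing : ∀ ξ k, f ξ k = lam → deriv (f ξ) k ≠ 0)
    (ξ₀ : ℝ) :
    ∃ r : ℕ, ∃ g : Fin r → ℝ → ℝ, ∃ δ > (0:ℝ),
      (∀ j, ContDiffAt ℝ 1 (g j) ξ₀) ∧
      ∀ ξ, |ξ - ξ₀| < δ →
        StrictMono (fun j => g j ξ) ∧ ∀ k, (f ξ k = lam ↔ ∃ j, g j ξ = k) := by
  classical
  set s := (fiber_finite f lam K hC1 hK hsing ξ₀).toFinset with hs
  set r := s.card with hr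
  set kv : Fin r → ℝ := ⇑(s.orderEmbOfFin rfl) with hkv
  have kmono : StrictMono kv := (s.orderEmbOfFin rfl).strictMono
  have kmem : ∀ j, f ξ₀ (kv j) = lam := by
    intro j
    have h1 : kv j ∈ s := Finset.orderEmbOfFin_mem s rfl j
    exact ((fiber_finite f lam K hC1 hK hsing ξ₀).mem_toFinset).mp h1
  have ksurj : ∀ k, f ξ₀ k = lam → ∃ j, kv j = k := by
    intro k hk
    have hk' : k ∈ (s : Set ℝ) := Finset.mem_coe.mpr (((fiber_finite f lam K hC1 hK hsing ξ₀).mem_toFinset).mpr hk)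
    rw [← Finset.range_orderEmbOfFin s rfl] at hk'
    exact hk'
  obtain ⟨ρg, hρg, hgap⟩ := fin_gap r kv kmono
  choose g hgC1 hgx δ₁ hδ₁ ρ₁ hρ₁ hsol huniq using
    fun j => local_implicit f lam hC1 ξ₀ (kv j) (kmem j) (hsing _ _ (kmem j))
  set ρ' : Fin r → ℝ := fun j => min (ρ₁ j) ρg with hρ'def
  have hρ' : ∀ j, 0 < ρ' j := fun j => lt_min (hρ₁ j) hρg
  have hshrink : ∀ j, ∃ δ₂, 0 < δ₂ ∧ δ₂ ≤ δ₁ j ∧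
      ∀ ξ, |ξ - ξ₀| < δ₂ → |g j ξ - kv j| < ρ' j := by
    intro j
    have hev : ∀ᶠ ξ in nhds ξ₀, |g j ξ - kv j| < ρ' j := by
      have hc : ContinuousAt (fun ξ => |g j ξ - kv j|) ξ₀ :=
        (continuous_abs.continuousAt).comp (((hgC1 j).continuousAt).sub continuousAt_const)
      have h0 : |g j ξ₀ - kv j| < ρ' j := by
        rw [hgx j]
        simpa using hρ' j
      exact hc.eventually_lt continuousAt_const h0
    obtain ⟨ε, hε, hh⟩ := Metric.eventually_nhds_iff.mp hev
    exact ⟨min ε (δ₁ j), lt_min hε (hδ₁ j), min_le_right _ _,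
      fun ξ hξ => hh (by rw [Real.dist_eq]; exact lt_of_lt_of_le hξ (min_le_left _ _))⟩
  choose δ₂ hδ₂pos hδ₂le hδ₂ using hshrink
  set U : Set (ℝ × ℝ) := ⋃ j, (Metric.ball ξ₀ (δ₂ j)) ×ˢ (Metric.ball (kv j) (ρ' j)) with hU
  have hUopen : IsOpen U := isOpen_iUnion fun j => Metric.isOpen_ball.prod Metric.isOpen_ball
  set T : Set (ℝ × ℝ) := ((Set.Icc (ξ₀-1) (ξ₀+1) ×ˢ Set.Icc (-K) K) ∩
      {p : ℝ × ℝ | f p.1 p.2 = lam}) ∩ Uᶜ with hT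
  have hTclosed : IsClosed T :=
    ((isClosed_Icc.prod isClosed_Icc).inter (isClosed_eq hC1.continuous continuous_const)).inter
      hUopen.isClosed_compl
  have hTcomp : IsCompact T :=
    (isCompact_Icc.prod isCompact_Icc).of_isClosed_subset hTclosed fun p hp => hp.1.1
  have hTpcomp : IsCompact (Prod.fst '' T) := hTcomp.image continuous_fst
  have hξ₀Tp : ξ₀ ∉ Prod.fst '' T := by
    rintro ⟨p, hpT, hp1⟩
    have hsolp : f ξ₀ p.2 = lam := by
      have := hpT.1.2
      rwa [Set.mem_setOf_eq, hp1] at this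
    obtain ⟨j, hj⟩ := ksurj p.2 hsolp
    apply hpT.2
    refine Set.mem_iUnion.mpr ⟨j, ?_⟩
    constructor
    · rw [hp1]; exact Metric.mem_ball_self (hδ₂pos j)
    · rw [← hj]; exact Metric.mem_ball_self (hρ' j)
  obtain ⟨δ₀, hδ₀, hball⟩ := Metric.mem_nhds_iff.mp
    (hTpcomp.isClosed.isOpen_compl.mem_nhds hξ₀Tp)
  obtain ⟨εδ, hεδ, hεδle⟩ := fin_pos_min r δ₂ hδ₂pos
  refine ⟨r, g, min δ₀ (min 1 εδ), by positivity, hgC1, ?_⟩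
  intro ξ hξ
  have hξδ₂ : ∀ j, |ξ - ξ₀| < δ₂ j := fun j =>
    lt_of_lt_of_le hξ (((min_le_right _ _).trans (min_le_right _ _)).trans (hεδle j))
  constructor
  · intro i j hij
    have hi := hδ₂ i ξ (hξδ₂ i)
    have hj := hδ₂ j ξ (hξδ₂ j)
    have hgapij := hgap i j hij
    have h1 : ρ' i ≤ ρg := min_le_right _ _
    have h2 : ρ' j ≤ ρg := min_le_right _ _
    rw [abs_lt] at hi hj
    simp only
    linarith [hi.2, hj.1]
  · intro k
    constructor
    · intro hk
      have hkK := hK ξ k hk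
      rw [abs_lt] at hkK
      have hξ1 : |ξ - ξ₀| < 1 :=
        lt_of_lt_of_le hξ ((min_le_right _ _).trans (min_le_left _ _))
      rw [abs_lt] at hξ1
      have hnotT : (ξ, k) ∉ T := by
        intro hmem
        have hξball : ξ ∈ Metric.ball ξ₀ δ₀ := by
          rw [Metric.mem_ball, Real.dist_eq]
          exact lt_of_lt_of_le hξ (min_le_left _ _)
        exact hball hξball ⟨(ξ, k), hmem, rfl⟩
      have hUmem : (ξ, k) ∈ U := by
        by_contra hcon
        exact hnotT ⟨⟨⟨⟨by linarith, by linarith⟩, ⟨by linarith, by linarith⟩⟩, hk⟩, hcon⟩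
      obtain ⟨j, hj⟩ := Set.mem_iUnion.mp hUmem
      obtain ⟨hj1, hj2⟩ := hj
      rw [Metric.mem_ball, Real.dist_eq] at hj1 hj2
      refine ⟨j, (huniq j ξ k (lt_of_lt_of_le hj1 (hδ₂le j))
        (lt_of_lt_of_le hj2 (min_le_left _ _)) hk).symm⟩
    · rintro ⟨j, rfl⟩
      exact (hsol j ξ (lt_of_lt_of_le (hξδ₂ j) (hδ₂le j))).2

/-- Global structure for a single dispersion curve: finitely many global C¹ periodic graphs
exhausting the solution set. -/
lemma core_global (f : ℝ → ℝ → ℝ) (lam K : ℝ)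
    (hC1 : ContDiff ℝ 1 fun p : ℝ × ℝ => f p.1 p.2)
    (hper : ∀ ξ k, f (ξ+1) k = f ξ k)
    (hK : ∀ ξ k, f ξ k = lam → |k| < K)
    (hsing : ∀ ξ k, f ξ k = lam → deriv (f ξ) k ≠ 0) :
    ∃ r : ℕ, ∃ h : Fin r → ℝ → ℝ,
      (∀ j, ContDiff ℝ 1 (h j)) ∧ (∀ j ξ, h j (ξ+1) = h j ξ) ∧
      (∀ j ξ, f ξ (h j ξ) = lam) ∧ (∀ ξ k, f ξ k = lam ↔ ∃ j, h j ξ = k) := by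
  classical
  have hfin : ∀ ξ, {k : ℝ | f ξ k = lam}.Finite := fiber_finite f lam K hC1 hK hsing
  set c : ℝ → ℕ := fun ξ => {k : ℝ | f ξ k = lam}.ncard with hc
  have key : ∀ (ξ₀ : ℝ) (r : ℕ) (g : Fin r → ℝ → ℝ),
      (StrictMono fun j => g j ξ₀) → (∀ k, f ξ₀ k = lam ↔ ∃ j, g j ξ₀ = k) → c ξ₀ = r := by
    intro ξ₀ r g hmono hiff
    have hset : {k : ℝ | f ξ₀ k = lam} = Set.range (fun j => g j ξ₀) := by
      ext k
      rw [Set.mem_setOf_eq, Set.mem_range]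
      exact hiff k
    rw [hc]
    simp only
    rw [hset, ← Set.image_univ, Set.ncard_image_of_injective _ hmono.injective, Set.ncard_univ]
    simp
  have hloc : IsLocallyConstant c := by
    rw [IsLocallyConstant.iff_eventually_eq]
    intro ξ₀
    obtain ⟨r, g, δ, hδ, hgC1, hstruct⟩ := local_structure f lam K hC1 hK hsing ξ₀
    have hev : ∀ᶠ ξ in nhds ξ₀, |ξ - ξ₀| < δ :=
      Metric.eventually_nhds_iff.mpr ⟨δ, hδ, fun y hy => by rwa [Real.dist_eq] at hy⟩
    filter_upwards [hev] with ξ hξ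
    have h1 := hstruct ξ hξ
    have h2 := hstruct ξ₀ (by simpa using hδ)
    rw [key ξ r (fun j _ => g j ξ) h1.1 h1.2, key ξ₀ r (fun j _ => g j ξ₀) h2.1 h2.2]
  have hconst : ∀ ξ, c ξ = c 0 := fun ξ => hloc.apply_eq_of_preconnectedSpace ξ 0
  have hcard : ∀ ξ, (hfin ξ).toFinset.card = c 0 := by
    intro ξ
    rw [← Set.ncard_eq_toFinset_card _ (hfin ξ)]
    exact hconst ξ
  refine ⟨c 0, fun j ξ => (hfin ξ).toFinset.orderEmbOfFin (hcard ξ) j, ?_, ?_, ?_, ?_⟩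
  · -- C¹
    intro j
    rw [contDiff_iff_contDiffAt]
    intro ξ₀
    obtain ⟨r', g, δ, hδ, hgC1, hstruct⟩ := local_structure f lam K hC1 hK hsing ξ₀
    have h2 := hstruct ξ₀ (by simpa using hδ)
    have hr' : r' = c 0 := by rw [← key ξ₀ r' (fun j _ => g j ξ₀) h2.1 h2.2, hconst ξ₀]
    subst hr'
    have hmatch : ∀ ξ, |ξ - ξ₀| < δ → ∀ i : Fin (c 0),
        (hfin ξ).toFinset.orderEmbOfFin (hcard ξ) i = g i ξ := by
      intro ξ hξ i
      obtain ⟨hmono', hiff⟩ := hstruct ξ hξ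
      have huniq := Finset.orderEmbOfFin_unique (hcard ξ) (f := fun i => g i ξ)
        (fun i => ((hfin ξ).mem_toFinset).mpr ((hiff _).mpr ⟨i, rfl⟩)) hmono'
      exact (congrFun huniq i).symm
    have hev : (fun ξ => ((hfin ξ).toFinset.orderEmbOfFin (hcard ξ) j : ℝ)) =ᶠ[nhds ξ₀] g j :=
      Metric.eventually_nhds_iff.mpr ⟨δ, hδ, fun ξ hξ => by
        rw [Real.dist_eq] at hξ
        exact hmatch ξ hξ j⟩
    exact (hgC1 j).congr_of_eventuallyEq hev
  · -- periodic
    intro j ξ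
    have hfinseteq : (hfin (ξ+1)).toFinset = (hfin ξ).toFinset := by
      ext k
      rw [Set.Finite.mem_toFinset, Set.Finite.mem_toFinset, Set.mem_setOf_eq, Set.mem_setOf_eq,
        hper ξ k]
    have hmem : ∀ i : Fin (c 0),
        ((hfin ξ).toFinset.orderEmbOfFin (hcard ξ) i : ℝ) ∈ (hfin (ξ+1)).toFinset := by
      intro i
      rw [hfinseteq]
      exact Finset.orderEmbOfFin_mem _ _ i
    have huniq := Finset.orderEmbOfFin_unique (hcard (ξ+1))
      (f := fun i => ((hfin ξ).toFinset.orderEmbOfFin (hcard ξ) i : ℝ)) hmem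
      ((hfin ξ).toFinset.orderEmbOfFin (hcard ξ)).strictMono
    exact (congrFun huniq j).symm
  · -- solves
    intro j ξ
    exact ((hfin ξ).mem_toFinset).mp (Finset.orderEmbOfFin_mem _ _ j)
  · -- exhausts
    intro ξ k
    constructor
    · intro hk
      have hk' : k ∈ ((hfin ξ).toFinset : Set ℝ) :=
        Finset.mem_coe.mpr (((hfin ξ).mem_toFinset).mpr hk)
      rw [← Finset.range_orderEmbOfFin _ (hcard ξ)] at hk'
      exact hk'
    · rintro ⟨j, rfl⟩
      exact ((hfin ξ).mem_toFinset).mp (Finset.orderEmbOfFin_mem _ _ j)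

/-- global solvability of the eikonal equation: for `λ` outside the
singular set `Σ = σ_bulk ∪ σ_sing`, there are finitely many globally defined `C¹`
curves `k₁,…,k_N : 𝕋 → ℝ` solving `ν_{n_j}(ξ, k_j(ξ)) = λ`, and they exhaust all
solutions of `ν_n(ξ,k) = λ`.  The circle `𝕋` is modeled by `1`-periodic functions. -/
theorem eikonal_global_solvability
    (ν : ℕ → ℝ → ℝ → ℝ) (m bp bm lam : ℝ)
    (hm : 0 < m) (hbp : 0 < bp) (hbm : 0 < bm)
    (hC1 : ∀ n, ContDiff ℝ 1 fun p : ℝ × ℝ => ν n p.1 p.2)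
    (hper : ∀ (n : ℕ) (ξ k : ℝ), ν n (ξ + 1) k = ν n ξ k)
    (hmono : ∀ ξ k, StrictMono fun n : ℕ => ν n ξ k)
    (hlb : ∀ (n : ℕ) (ξ k : ℝ), m * ((n : ℝ) + 1/2) ≤ ν n ξ k)
    (hlim_bot : ∀ (n : ℕ), ∀ ε > (0:ℝ), ∃ K : ℝ, ∀ ξ k, k ≤ -K →
      |ν n ξ k - bm * ((n : ℝ) + 1/2)| < ε)
    (hlim_top : ∀ (n : ℕ), ∀ ε > (0:ℝ), ∃ K : ℝ, ∀ ξ k, K ≤ k →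
      |ν n ξ k - bp * ((n : ℝ) + 1/2)| < ε)
    -- λ avoids the bulk spectrum σ_bulk
    (hbulk : ∀ n : ℕ, lam ≠ bm * ((n : ℝ) + 1/2) ∧ lam ≠ bp * ((n : ℝ) + 1/2))
    -- λ avoids the singular set σ_sing : ∂_k ν_n ≠ 0 at every solution
    (hsing : ∀ (n : ℕ) (ξ k : ℝ), ν n ξ k = lam → deriv (fun k' => ν n ξ k') k ≠ 0) :
    ∃ (N : ℕ) (kk : Fin N → ℝ → ℝ),
      (∀ j, ContDiff ℝ 1 (kk j) ∧ (∀ ξ, kk j (ξ + 1) = kk j ξ) ∧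
        ∃ n : ℕ, ∀ ξ, ν n ξ (kk j ξ) = lam) ∧
      ∀ ξ k, (∃ n : ℕ, ν n ξ k = lam) ↔ ∃ j, kk j ξ = k := by
  classical
  -- a bound on k for each n
  have hKex : ∀ n : ℕ, ∃ K : ℝ, ∀ ξ k, ν n ξ k = lam → |k| < K := by
    intro n
    have hem : 0 < |lam - bm * ((n : ℝ) + 1/2)| := abs_pos.mpr (sub_ne_zero.mpr (hbulk n).1)
    have hep : 0 < |lam - bp * ((n : ℝ) + 1/2)| := abs_pos.mpr (sub_ne_zero.mpr (hbulk n).2)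
    obtain ⟨K₁, hK₁⟩ := hlim_bot n _ hem
    obtain ⟨K₂, hK₂⟩ := hlim_top n _ hep
    refine ⟨max K₁ K₂ + 1, fun ξ k hk => ?_⟩
    rw [abs_lt]
    constructor
    · by_contra hcon
      push_neg at hcon
      have hkle : k ≤ -K₁ := by
        have := le_max_left K₁ K₂
        linarith
      have := hK₁ ξ k hkle
      rw [hk] at this
      exact absurd this (lt_irrefl _)
    · by_contra hcon
      push_neg at hcon
      have hkge : K₂ ≤ k := by
        have := le_max_right K₁ K₂
        linarith
      have := hK₂ ξ k hkge
      rw [hk] at this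
      exact absurd this (lt_irrefl _)
  -- apply the single-curve global structure to each n
  have hcore : ∀ n : ℕ, ∃ r : ℕ, ∃ h : Fin r → ℝ → ℝ,
      (∀ j, ContDiff ℝ 1 (h j)) ∧ (∀ j ξ, h j (ξ+1) = h j ξ) ∧
      (∀ j ξ, ν n ξ (h j ξ) = lam) ∧ (∀ ξ k, ν n ξ k = lam ↔ ∃ j, h j ξ = k) := by
    intro n
    obtain ⟨K, hK⟩ := hKex n
    exact core_global (ν n) lam K (hC1 n) (hper n) hK (hsing n)
  choose r h hhC1 hhper hhsol hhiff using hcore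
  -- bound on the relevant indices
  obtain ⟨n₀, hn₀⟩ := exists_nat_gt (lam / m)
  have hbound : ∀ (n : ℕ) (ξ k : ℝ), ν n ξ k = lam → n ≤ n₀ := by
    intro n ξ k hk
    by_contra hcon
    push_neg at hcon
    have h1 : (n₀ : ℝ) ≤ (n : ℝ) := Nat.cast_le.mpr (le_of_lt hcon)
    have h2 : lam < m * n₀ := by
      rw [div_lt_iff₀ hm] at hn₀
      linarith [hn₀]
    have h3 := hlb n ξ k
    rw [hk] at h3
    nlinarith
  -- inductive assembly
  have main : ∀ M : ℕ, ∃ N : ℕ, ∃ kk : Fin N → ℝ → ℝ,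
      (∀ j, ContDiff ℝ 1 (kk j) ∧ (∀ ξ, kk j (ξ + 1) = kk j ξ) ∧
        ∃ n : ℕ, ∀ ξ, ν n ξ (kk j ξ) = lam) ∧
      ∀ ξ k, (∃ n, n ≤ M ∧ ν n ξ k = lam) ↔ ∃ j, kk j ξ = k := by
    intro M
    induction M with
    | zero =>
      refine ⟨r 0, h 0, fun j => ⟨hhC1 0 j, hhper 0 j, 0, hhsol 0 j⟩, fun ξ k => ?_⟩
      rw [← hhiff 0 ξ k]
      constructor
      · rintro ⟨n, hn, hsol⟩
        rwa [Nat.le_zero.mp hn] at hsol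
      · intro hsol
        exact ⟨0, le_refl _, hsol⟩
    | succ M IH =>
      obtain ⟨N, kk, hprops, hiff⟩ := IH
      refine ⟨N + r (M+1), Fin.append kk (h (M+1)), ?_, ?_⟩
      · intro j
        induction j using Fin.addCases with
        | left i => simpa [Fin.append_left] using hprops i
        | right i =>
          simp only [Fin.append_right]
          exact ⟨hhC1 (M+1) i, hhper (M+1) i, M+1, hhsol (M+1) i⟩
      · intro ξ k
        constructor
        · rintro ⟨n, hn, hsol⟩
          rcases Nat.le_succ_iff.mp hn with hle | heq
          · obtain ⟨j, hj⟩ := (hiff ξ k).mp ⟨n, hle, hsol⟩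
            exact ⟨Fin.castAdd _ j, by rwa [Fin.append_left]⟩
          · obtain ⟨j, hj⟩ := (hhiff (M+1) ξ k).mp (by rwa [heq] at hsol)
            exact ⟨Fin.natAdd _ j, by rwa [Fin.append_right]⟩
        · rintro ⟨j, hj⟩
          induction j using Fin.addCases with
          | left i =>
            rw [Fin.append_left] at hj
            obtain ⟨n, hn, hsol⟩ := (hiff ξ k).mpr ⟨i, hj⟩
            exact ⟨n, le_trans hn (Nat.le_succ _), hsol⟩
          | right i =>
            rw [Fin.append_right] at hj
            refine ⟨M+1, le_refl _, ?_⟩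
            rw [← hj]
            exact hhsol (M+1) i ξ
  obtain ⟨N, kk, hprops, hiff⟩ := main n₀
  refine ⟨N, kk, hprops, fun ξ k => ?_⟩
  rw [← hiff ξ k]
  constructor
  · rintro ⟨n, hsol⟩
    exact ⟨n, hbound n ξ k hsol, hsol⟩
  · rintro ⟨n, _, hsol⟩
    exact ⟨n, hsol⟩
end

section
/- (Separation of eikonal branches.) In the setting of the previous statement, with λ ∉ Σ and k₁, …, k_N : 𝕋 → ℝ the continuous curves solving ν_{n_j}(ξ, k_j(ξ)) = λ, there exists δ > 0 such that |k_i(ξ) - k_j(ξ)| ≥ δ for all ξ ∈ 𝕋 and all i ≠ j. -/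
open Set

/-- separation of eikonal branches: for `λ ∉ Σ`, distinct continuous
periodic solution curves of the eikonal equation `ν_{n_j}(ξ, k_j(ξ)) = λ` are
uniformly separated: `|k_i(ξ) - k_j(ξ)| ≥ δ > 0` on all of `𝕋` for `i ≠ j`. -/
theorem eikonal_branch_separation
    (ν : ℕ → ℝ → ℝ → ℝ) (lam : ℝ)
    (hC1 : ∀ n, ContDiff ℝ 1 fun p : ℝ × ℝ => ν n p.1 p.2)
    (hper : ∀ (n : ℕ) (ξ k : ℝ), ν n (ξ + 1) k = ν n ξ k)
    (hmono : ∀ ξ k, StrictMono fun n : ℕ => ν n ξ k)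
    -- λ avoids σ_sing : ∂_k ν_n ≠ 0 at every solution of ν_n = λ
    (hsing : ∀ (n : ℕ) (ξ k : ℝ), ν n ξ k = lam → deriv (fun k' => ν n ξ k') k ≠ 0)
    (N : ℕ) (kk : Fin N → ℝ → ℝ)
    (hcont : ∀ j, Continuous (kk j))
    (hkper : ∀ j ξ, kk j (ξ + 1) = kk j ξ)
    (hsol : ∀ j, ∃ n : ℕ, ∀ ξ, ν n ξ (kk j ξ) = lam)
    (hdistinct : ∀ i j, i ≠ j → kk i ≠ kk j) :
    ∃ δ > (0:ℝ), ∀ ξ : ℝ, ∀ i j, i ≠ j → δ ≤ |kk i ξ - kk j ξ| := by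
  classical
  set D : ℕ → ℝ × ℝ → ℝ := fun n p => fderiv ℝ (fun q : ℝ × ℝ => ν n q.1 q.2) p (0, 1)
    with hDdef
  have hder : ∀ (n : ℕ) (ξ k : ℝ),
      HasDerivAt (fun k' => ν n ξ k') (D n (ξ, k)) k := by
    intro n ξ k
    have h1 : HasFDerivAt (fun q : ℝ × ℝ => ν n q.1 q.2)
        (fderiv ℝ (fun q : ℝ × ℝ => ν n q.1 q.2) (ξ, k)) (ξ, k) :=
      ((hC1 n).differentiable one_ne_zero (ξ, k)).hasFDerivAt
    have h2 : HasDerivAt (fun k' : ℝ => ((ξ, k') : ℝ × ℝ)) ((0 : ℝ), (1 : ℝ)) k :=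
      HasDerivAt.prodMk (hasDerivAt_const k ξ) (hasDerivAt_id k)
    exact h1.comp_hasDerivAt k h2
  have hDcont : ∀ n, Continuous (D n) := by
    intro n
    exact ((hC1 n).continuous_fderiv one_ne_zero).clm_apply continuous_const
  -- Key claim: distinct curves never touch.
  have key : ∀ i j, i ≠ j → ∀ ξ, kk i ξ ≠ kk j ξ := by
    intro i j hij ξ₀ heq
    obtain ⟨ni, hni⟩ := hsol i
    obtain ⟨nj, hnj⟩ := hsol j
    have hn : ni = nj := by
      apply (hmono ξ₀ (kk j ξ₀)).injective
      have h1 := hni ξ₀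
      rw [heq] at h1
      simpa [h1] using (hnj ξ₀).symm
    subst hn
    set S : Set ℝ := {x | kk i x = kk j x} with hSdef
    have hSc : IsClosed S := isClosed_eq (hcont i) (hcont j)
    have hSo : IsOpen S := by
      rw [isOpen_iff_mem_nhds]
      intro x hx
      have hk₀ : ν ni x (kk i x) = lam := hni x
      have hD0 : D ni (x, kk i x) ≠ 0 := by
        have h := hsing ni x (kk i x) hk₀
        rwa [(hder ni x (kk i x)).deriv] at h
      have hop : IsOpen {p : ℝ × ℝ | D ni p ≠ 0} :=
        isOpen_compl_iff.mpr (isClosed_eq (hDcont ni) continuous_const)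
      obtain ⟨ε, hε, hball⟩ := Metric.isOpen_iff.mp hop (x, kk i x) hD0
      have hWi : ∀ᶠ y in nhds x, kk i y ∈ Metric.ball (kk i x) ε :=
        (hcont i).continuousAt.preimage_mem_nhds (Metric.ball_mem_nhds _ hε)
      have hWj : ∀ᶠ y in nhds x, kk j y ∈ Metric.ball (kk i x) ε := by
        have : kk j x = kk i x := hx.symm
        exact (hcont j).continuousAt.preimage_mem_nhds (this ▸ Metric.ball_mem_nhds _ hε)
      have hWx : ∀ᶠ y in nhds x, y ∈ Metric.ball x ε :=
        Metric.ball_mem_nhds _ hε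
      have hev : ∀ᶠ y in nhds x, kk i y = kk j y := by
        filter_upwards [hWi, hWj, hWx] with y hyi hyj hyx
        -- helper: two solutions in the ball must coincide
        have contr : ∀ a b : ℝ, a < b → ν ni y a = lam → ν ni y b = lam →
            a ∈ Metric.ball (kk i x) ε → b ∈ Metric.ball (kk i x) ε → False := by
          intro a b hab ha hb hba hbb
          have hfc : ContinuousOn (fun k => ν ni y k) (Icc a b) :=
            (((hC1 ni).continuous).comp (Continuous.prodMk_right y)).continuousOn
          obtain ⟨c, hc, hc0⟩ := exists_deriv_eq_zero hab hfc (by rw [ha, hb])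
          have hcd : deriv (fun k => ν ni y k) c = D ni (y, c) := (hder ni y c).deriv
          have hcball : (y, c) ∈ Metric.ball (x, kk i x) ε := by
            rw [Metric.mem_ball, Prod.dist_eq]
            refine max_lt (Metric.mem_ball.mp hyx) ?_
            have hba' : |a - kk i x| < ε := by
              simpa [Real.dist_eq] using hba
            have hbb' : |b - kk i x| < ε := by
              simpa [Real.dist_eq] using hbb
            obtain ⟨h1, h2⟩ := abs_lt.mp hba'
            obtain ⟨h3, h4⟩ := abs_lt.mp hbb'
            rw [Real.dist_eq, abs_lt]
            constructor
            · linarith [hc.1]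
            · linarith [hc.2]
          exact hball hcball (hcd.symm.trans hc0)
        rcases lt_trichotomy (kk i y) (kk j y) with h | h | h
        · exact absurd (contr _ _ h (hni y) (hnj y) hyi hyj) id
        · exact h
        · exact absurd (contr _ _ h (hnj y) (hni y) hyj hyi) id
      exact hev
    have hSu : S = univ :=
      IsClopen.eq_univ ⟨hSc, hSo⟩ ⟨ξ₀, heq⟩
    exact hdistinct i j hij (funext fun x => (hSu ▸ (mem_univ x) : x ∈ S))
  -- Now extract a uniform gap by compactness on [0,1].
  have hpair : ∀ p : Fin N × Fin N, ∃ d : ℝ, 0 < d ∧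
      (p.1 ≠ p.2 → ∀ ξ : ℝ, d ≤ |kk p.1 ξ - kk p.2 ξ|) := by
    rintro ⟨i, j⟩
    by_cases hij : i = j
    · exact ⟨1, one_pos, fun h => absurd hij h⟩
    · have hcf : Continuous fun ξ => |kk i ξ - kk j ξ| :=
        ((hcont i).sub (hcont j)).abs
      obtain ⟨x₀, hx₀, hmin⟩ := isCompact_Icc.exists_isMinOn (α := ℝ)
        (s := Icc (0:ℝ) 1) ⟨0, by norm_num⟩ hcf.continuousOn
      refine ⟨|kk i x₀ - kk j x₀|, ?_, fun _ ξ => ?_⟩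
      · exact abs_pos.mpr (sub_ne_zero.mpr (key i j hij x₀))
      · -- reduce to [0,1] by periodicity
        have hpi : Function.Periodic (kk i) 1 := fun x => hkper i x
        have hpj : Function.Periodic (kk j) 1 := fun x => hkper j x
        have hfr : ∀ (f : ℝ → ℝ), Function.Periodic f 1 → f (Int.fract ξ) = f ξ := by
          intro f hf
          have h2 := hf.sub_int_mul_eq (x := ξ) ⌊ξ⌋
          rw [mul_one] at h2
          exact h2
        have hmem : Int.fract ξ ∈ Icc (0:ℝ) 1 :=
          ⟨Int.fract_nonneg ξ, (Int.fract_lt_one ξ).le⟩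
        calc |kk i x₀ - kk j x₀| ≤ |kk i (Int.fract ξ) - kk j (Int.fract ξ)| := hmin hmem
          _ = |kk i ξ - kk j ξ| := by rw [hfr _ hpi, hfr _ hpj]
  choose d hd0 hdle using hpair
  by_cases hne : Nonempty (Fin N × Fin N)
  · obtain ⟨p₀⟩ := hne
    refine ⟨Finset.univ.inf' ⟨p₀, Finset.mem_univ p₀⟩ d, ?_, ?_⟩
    · exact (Finset.lt_inf'_iff _).mpr fun p _ => hd0 p
    · intro ξ i j hij
      exact le_trans (Finset.inf'_le d (Finset.mem_univ (i, j))) (hdle (i, j) hij ξ)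
  · refine ⟨1, one_pos, fun ξ i j hij => absurd ⟨(i, j)⟩ hne⟩
end
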